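/- In the Cartesian tree of an array A of distinct values, for any indices i ≤ j, the answer to the range minimum query RMQ(i,j) is the inorder rank of the lowest common ancestor of the nodes with inorder ranks i and j. -/

import Mathlib

inductive BT where
  | leaf : BT
  | node : BT → BT → BT
deriving DecidableEq

namespace BT

/-- Number of nodes. -/
def size : BT → ℕ
  | leaf => 0
  | node l r => l.size + r.size + 1

/-- Inorder list of node positions (paths from the root; `false` = left step). -/
def inList : BT → List (List Bool)
  | leaf => []
  | node l r => (l.inList).map (List.cons false) ++ [] :: (r.inList).map (List.cons true)

/-- Preorder list of node positions. -/
def preList : BT → List (List Bool)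
  | leaf => []
  | node l r => [] :: ((l.preList).map (List.cons false) ++ (r.preList).map (List.cons true))

/-- Subtree rooted at a given position, if the position is valid. -/
def subtree? : BT → List Bool → Option BT
  | t, [] => some t
  | leaf, _ :: _ => none
  | node l r, b :: p => if b then r.subtree? p else l.subtree? p

/-- Size of the left spine (maximal path following left children, top node included). -/
def Lspine : BT → ℕ
  | leaf => 0
  | node l _ => l.Lspine + 1

/-- Size of the right spine. -/
def Rspine : BT → ℕ
  | leaf => 0
  | node _ r => r.Rspine + 1

/-- Size of the left inner spine of the root: right spine of the left child. -/
def lv : BT → ℕ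
  | leaf => 0
  | node l _ => l.Rspine

/-- Size of the right inner spine of the root: left spine of the right child. -/
def rv : BT → ℕ
  | leaf => 0
  | node _ r => r.Lspine

/-- Sum of `f` over all (sub)trees rooted at nodes of the tree. -/
def sumNodes (f : BT → ℕ) : BT → ℕ
  | leaf => 0
  | node l r => f (node l r) + sumNodes f l + sumNodes f r

/-- Number of leaf nodes (nodes with no children). -/
def leaves : BT → ℕ
  | leaf => 0
  | node leaf leaf => 1
  | node l r => leaves l + leaves r

end BT

/-- Longest common prefix of two paths: the LCA of two positions in a binary tree. -/
def lcp : List Bool → List Bool → List Bool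
  | a :: p, b :: q => if a = b then a :: lcp p q else []
  | _, _ => []

/-- Index of the minimum element of a list (0 if empty). -/
def minIdx {α : Type*} [LinearOrder α] (l : List α) : ℕ :=
  match l.argmin id with
  | none => 0
  | some a => l.idxOf a

/-- Cartesian tree construction with fuel. -/
def cartesianAux {α : Type*} [LinearOrder α] : ℕ → List α → BT
  | 0, _ => .leaf
  | _ + 1, [] => .leaf
  | n + 1, l@(_ :: _) =>
      .node (cartesianAux n (l.take (minIdx l))) (cartesianAux n (l.drop (minIdx l + 1)))

/-- The Cartesian tree of a list: root at the position of the minimum,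
recursively built on the prefix before and the suffix after the minimum. -/
def cartesian {α : Type*} [LinearOrder α] (l : List α) : BT :=
  cartesianAux l.length l

/-- `k` is the position of the minimum of `A` on the range `[i, j]`. -/
def isArgmin {α : Type*} [LinearOrder α] {n : ℕ} (A : Fin n → α) (i j k : Fin n) : Prop :=
  i ≤ k ∧ k ≤ j ∧ ∀ m, i ≤ m → m ≤ j → A k ≤ A m

/-- `k` is the position of the second smallest element of `A` on the range `[i, j]`. -/
def isSecondMin {α : Type*} [LinearOrder α] {n : ℕ} (A : Fin n → α) (i j k : Fin n) : Prop :=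
  i ≤ k ∧ k ≤ j ∧
    ∃ m, isArgmin A i j m ∧ k ≠ m ∧ ∀ l, i ≤ l → l ≤ j → l ≠ m → A k ≤ A l

/-- The node with inorder number `i` in `t` has a left child. -/
def hasLeftChildAt (t : BT) (i : ℕ) : Prop :=
  ∃ (p : List Bool) (ll lr r : BT),
    t.inList[i]? = some p ∧ t.subtree? p = some (.node (.node ll lr) r)

section Aux

variable {α : Type*} [LinearOrder α]

lemma lcp_nil_left (q : List Bool) : lcp [] q = [] := by cases q <;> rfl
lemma lcp_nil_right (p : List Bool) : lcp p [] = [] := by cases p <;> rfl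
lemma lcp_cons (a b : Bool) (p q : List Bool) :
    lcp (a :: p) (b :: q) = if a = b then a :: lcp p q else [] := rfl

lemma indexOf_map_cons (b : Bool) (x : List Bool) (L : List (List Bool)) :
    (L.map (List.cons b)).idxOf (b :: x) = L.idxOf x := by
  induction L with
  | nil => rfl
  | cons h t ih =>
      by_cases hx : x = h
      · subst hx
        simp [List.idxOf_cons]
      · have e1 : ((b :: h : List Bool) == (b :: x)) = false :=
          beq_eq_false_iff_ne.mpr (by simp [Ne.symm hx])
        have e2 : (h == x) = false := beq_eq_false_iff_ne.mpr (Ne.symm hx)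
        simp [List.idxOf_cons, e1, e2, ih]

lemma minIdx_lt_length (l : List α) (h : l ≠ []) : minIdx l < l.length := by
  obtain ⟨a, ha⟩ := List.exists_mem_of_ne_nil l h
  unfold minIdx
  cases hm : l.argmin id with
  | none => exact absurd (List.argmin_eq_none.mp hm) h
  | some m => exact List.idxOf_lt_length_iff.mpr (List.argmin_mem hm)

lemma getElem_minIdx_le (l : List α) (i : ℕ) (hi : i < l.length) (h : l ≠ [])
    (hm : minIdx l < l.length) : l[minIdx l] ≤ l[i] := by
  cases hmm : l.argmin id with
  | none => exact absurd (List.argmin_eq_none.mp hmm) h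
  | some m =>
      have hidx : minIdx l = l.idxOf m := by rw [minIdx, hmm]
      have hlt : l.idxOf m < l.length := hidx ▸ hm
      have h1 : l[minIdx l] = m := by simp only [hidx]; exact List.getElem_idxOf hlt
      rw [h1]
      exact List.le_of_mem_argmin (l.getElem_mem hi) hmm

lemma cartesianAux_congr : ∀ (f g : ℕ) (l : List α), l.length ≤ f → l.length ≤ g →
    cartesianAux f l = cartesianAux g l := by
  intro f
  induction f with
  | zero => intro g l hf hg
            have : l = [] := List.eq_nil_of_length_eq_zero (Nat.le_zero.mp hf)
            subst this; cases g <;> rfl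
  | succ f ih =>
      intro g l hf hg
      cases l with
      | nil => cases g <;> rfl
      | cons x xs =>
          cases g with
          | zero => simp at hg
          | succ g =>
              have hne : (x :: xs) ≠ [] := by simp
              have hm := minIdx_lt_length (x :: xs) hne
              show BT.node _ _ = BT.node _ _
              have h1 : (List.take (minIdx (x :: xs)) (x :: xs)).length ≤ f := by
                rw [List.length_take]; omega
              have h1g : (List.take (minIdx (x :: xs)) (x :: xs)).length ≤ g := by
                rw [List.length_take]; omega
              have h2 : (List.drop (minIdx (x :: xs) + 1) (x :: xs)).length ≤ f := by
                rw [List.length_drop]; omega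
              have h2g : (List.drop (minIdx (x :: xs) + 1) (x :: xs)).length ≤ g := by
                rw [List.length_drop]; omega
              rw [ih _ _ h1 h1g, ih _ _ h2 h2g]

lemma cartesianAux_eq_cartesian (f : ℕ) (l : List α) (h : l.length ≤ f) :
    cartesianAux f l = cartesian l :=
  cartesianAux_congr f l.length l h le_rfl

lemma cartesian_eq_node (l : List α) (h : l ≠ []) :
    cartesian l = BT.node (cartesian (l.take (minIdx l))) (cartesian (l.drop (minIdx l + 1))) := by
  have hm := minIdx_lt_length l h
  obtain ⟨x, xs, rfl⟩ := List.exists_cons_of_ne_nil h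
  show cartesianAux (xs.length + 1) _ = _
  rw [cartesianAux]
  rw [cartesianAux_eq_cartesian _ _ (by
        rw [List.length_take]
        exact le_trans (min_le_left _ _) (Nat.lt_succ_iff.mp hm)),
      cartesianAux_eq_cartesian _ _ (by
        rw [List.length_drop, List.length_cons]
        omega)]

lemma length_inList_cartesian : ∀ (N : ℕ) (l : List α), l.length ≤ N →
    (cartesian l).inList.length = l.length := by
  intro N
  induction N with
  | zero => intro l h
            have : l = [] := List.eq_nil_of_length_eq_zero (Nat.le_zero.mp h)
            subst this; rfl
  | succ N ih =>
      intro l h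
      rcases eq_or_ne l [] with rfl | hne
      · rfl
      · have hm := minIdx_lt_length l hne
        rw [cartesian_eq_node l hne, BT.inList]
        simp only [List.length_append, List.length_map, List.length_cons]
        rw [ih _ (by rw [List.length_take]; omega),
            ih _ (by rw [List.length_drop]; omega)]
        simp only [List.length_take, List.length_drop]
        omega

lemma indexOf_append_not_mem {x : List Bool} {L1 L2 : List (List Bool)} (h : x ∉ L1) :
    (L1 ++ L2).idxOf x = L1.length + L2.idxOf x := by
  induction L1 with
  | nil => simp
  | cons a t ihh =>
      have hne : a ≠ x := by rintro rfl; simp at h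
      have hb : (a == x) = false := beq_eq_false_iff_ne.mpr hne
      have h2 : x ∉ t := fun hx => h (List.mem_cons_of_mem _ hx)
      rw [List.cons_append, List.idxOf_cons, hb]
      show (t ++ L2).idxOf x + 1 = (a :: t).length + L2.idxOf x
      rw [ihh h2, List.length_cons]
      omega

lemma indexOf_append_mem {x : List Bool} {L1 L2 : List (List Bool)} (h : x ∈ L1) :
    (L1 ++ L2).idxOf x = L1.idxOf x := by
  induction L1 with
  | nil => simp at h
  | cons a t ihh =>
      by_cases hx : a = x
      · subst hx
        rw [List.cons_append, List.idxOf_cons, List.idxOf_cons]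
        simp
      · have hb : (a == x) = false := beq_eq_false_iff_ne.mpr hx
        have h2 : x ∈ t := by
          rcases List.mem_cons.mp h with h' | h'
          · exact absurd h'.symm hx
          · exact h'
        rw [List.cons_append, List.idxOf_cons, List.idxOf_cons, hb]
        show (t ++ L2).idxOf x + 1 = t.idxOf x + 1
        rw [ihh h2]

lemma indexOf_eq_length_of_not_mem {x : List Bool} {L : List (List Bool)} (h : x ∉ L) :
    L.idxOf x = L.length := by
  induction L with
  | nil => rfl
  | cons a t ihh =>
      have hne : a ≠ x := by rintro rfl; simp at h
      have hb : (a == x) = false := beq_eq_false_iff_ne.mpr hne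
      rw [List.idxOf_cons, hb]
      show t.idxOf x + 1 = t.length + 1
      rw [ihh (fun hx => h (List.mem_cons_of_mem _ hx))]

lemma getD_full_left {Lin Rin : List (List Bool)} {i : ℕ} (hi : i < Lin.length) :
    (Lin.map (List.cons false) ++ [] :: Rin.map (List.cons true)).getD i [] =
      false :: Lin.getD i [] := by
  rw [List.getD_eq_getElem?_getD, List.getD_eq_getElem?_getD, List.getElem?_append,
    if_pos (by simpa using hi), List.getElem?_map, List.getElem?_eq_getElem hi]
  rfl

lemma getD_full_mid {Lin Rin : List (List Bool)} :
    (Lin.map (List.cons false) ++ [] :: Rin.map (List.cons true)).getD Lin.length [] = [] := by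
  rw [List.getD_eq_getElem?_getD, List.getElem?_append,
    if_neg (by simp), List.length_map, Nat.sub_self]
  simp

lemma getD_full_right {Lin Rin : List (List Bool)} {i : ℕ} (hi : Lin.length < i)
    (hi2 : i - Lin.length - 1 < Rin.length) :
    (Lin.map (List.cons false) ++ [] :: Rin.map (List.cons true)).getD i [] =
      true :: Rin.getD (i - Lin.length - 1) [] := by
  obtain ⟨d, hd⟩ : ∃ d, i - Lin.length = d + 1 := ⟨i - Lin.length - 1, by omega⟩
  have hd2 : i - Lin.length - 1 = d := by omega
  rw [hd2] at hi2 ⊢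
  rw [List.getD_eq_getElem?_getD, List.getElem?_append,
    if_neg (by simp; omega), List.length_map, hd, List.getElem?_cons_succ,
    List.getElem?_map, List.getElem?_eq_getElem hi2,
    List.getD_eq_getElem?_getD, List.getElem?_eq_getElem hi2]
  rfl

lemma main_lemma {α : Type*} [LinearOrder α] : ∀ (N : ℕ) (l : List α), l.length ≤ N → l.Nodup →
    ∀ i j k : ℕ, i ≤ j → ∀ (hj : j < l.length) (hkl : k < l.length), i ≤ k → k ≤ j →
    (∀ m (hm : m < l.length), i ≤ m → m ≤ j → l[k] ≤ l[m]) →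
    (cartesian l).inList.idxOf
      (lcp ((cartesian l).inList.getD i []) ((cartesian l).inList.getD j [])) = k := by
  intro N
  induction N with
  | zero => intro l hN _ i j k _ hj; omega
  | succ N ih =>
    intro l hN hnd i j k hij hj hkl hik hkj hmin
    have hne : l ≠ [] := by intro h; subst h; simp at hj
    have hm : minIdx l < l.length := minIdx_lt_length l hne
    set m := minIdx l with hm_def
    have hfull : (cartesian l).inList =
        (cartesian (l.take m)).inList.map (List.cons false) ++
          [] :: (cartesian (l.drop (m + 1))).inList.map (List.cons true) := by
      rw [cartesian_eq_node l hne]; rfl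
    set Lin := (cartesian (l.take m)).inList with hLin
    set Rin := (cartesian (l.drop (m + 1))).inList with hRin
    have hLlen : Lin.length = m := by
      rw [hLin, length_inList_cartesian N _ (by
        rw [List.length_take]
        exact le_trans (min_le_left _ _) (by omega)), List.length_take]
      exact min_eq_left hm.le
    have hRlen : Rin.length = l.length - m - 1 := by
      rw [hRin, length_inList_cartesian N _ (by rw [List.length_drop]; omega),
        List.length_drop]
      omega
    rw [hfull]
    by_cases hcase1 : i ≤ m ∧ m ≤ j
    · -- k = m, lcp = []
      have hkm : k = m := by
        have h1 : l[k] ≤ l[m] := hmin m hm hcase1.1 hcase1.2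
        have h2 : l[m] ≤ l[k] := getElem_minIdx_le l k hkl hne hm
        exact hnd.getElem_inj_iff.mp (le_antisymm h1 h2)
      have hlcp : lcp ((Lin.map (List.cons false) ++ [] :: Rin.map (List.cons true)).getD i [])
          ((Lin.map (List.cons false) ++ [] :: Rin.map (List.cons true)).getD j []) = [] := by
        rcases eq_or_lt_of_le hcase1.1 with hi_eq | hi_lt
        · have : i = Lin.length := by omega
          rw [this, getD_full_mid, lcp_nil_left]
        · rw [getD_full_left (by omega)]
          rcases eq_or_lt_of_le hcase1.2 with hj_eq | hj_lt
          · have : j = Lin.length := by omega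
            rw [this, getD_full_mid, lcp_nil_right]
          · rw [getD_full_right (by omega) (by omega), lcp_cons, if_neg (by simp)]
      rw [hlcp]
      have hnm : ([] : List Bool) ∉ Lin.map (List.cons false) := by simp
      rw [indexOf_append_not_mem hnm, List.length_map, List.idxOf_cons]
      simp [hLlen, hkm]
    · push_neg at hcase1
      by_cases hcase2 : j < m
      · -- both left
        have hihyp := ih (l.take m) (by
            rw [List.length_take]; exact le_trans (min_le_left _ _) (by omega))
          ((List.take_sublist m l).nodup hnd) i j k hij
          (by rw [List.length_take]; omega) (by rw [List.length_take]; omega) hik hkj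
          (by
            intro m' hm' hi' hj'
            rw [List.getElem_take, List.getElem_take]
            exact hmin m' (by rw [List.length_take] at hm'; omega) hi' hj')
        rw [← hLin] at hihyp
        rw [getD_full_left (by omega), getD_full_left (by omega), lcp_cons, if_pos rfl]
        have hmem : lcp (Lin.getD i []) (Lin.getD j []) ∈ Lin := by
          by_contra hx
          rw [indexOf_eq_length_of_not_mem hx] at hihyp
          omega
        rw [indexOf_append_mem (List.mem_map_of_mem hmem), indexOf_map_cons, hihyp]
      · -- both right
        have hmi : m < i := by omega
        have hdroplen : (l.drop (m + 1)).length = l.length - m - 1 := by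
          rw [List.length_drop]; omega
        have hihyp := ih (l.drop (m + 1)) (by rw [List.length_drop]; omega)
          ((List.drop_sublist (m + 1) l).nodup hnd) (i - m - 1) (j - m - 1) (k - m - 1)
          (by omega) (by rw [hdroplen]; omega) (by rw [hdroplen]; omega) (by omega) (by omega)
          (by
            intro m' hm' hi' hj'
            rw [hdroplen] at hm'
            rw [List.getElem_drop, List.getElem_drop]
            have e1 : m + 1 + (k - m - 1) = k := by omega
            have h := hmin (m + 1 + m') (by omega) (by omega) (by omega)
            simp only [e1]
            exact h)
        rw [← hRin] at hihyp
        rw [getD_full_right (by omega) (by rw [hRlen, hLlen]; omega),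
            getD_full_right (by omega) (by rw [hRlen, hLlen]; omega), lcp_cons, if_pos rfl,
            hLlen]
        have hmem : lcp (Rin.getD (i - m - 1) []) (Rin.getD (j - m - 1) []) ∈ Rin := by
          by_contra hx
          rw [indexOf_eq_length_of_not_mem hx] at hihyp
          omega
        have hnm : (true :: lcp (Rin.getD (i - m - 1) []) (Rin.getD (j - m - 1) []))
            ∉ Lin.map (List.cons false) := by simp
        rw [indexOf_append_not_mem hnm, List.length_map, hLlen, List.idxOf_cons]
        have hbeq : (([] : List Bool) == (true :: lcp (Rin.getD (i - m - 1) [])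
            (Rin.getD (j - m - 1) []))) = false := beq_eq_false_iff_ne.mpr (by simp)
        rw [hbeq]
        show m + ((Rin.map (List.cons true)).idxOf _ + 1) = k
        rw [indexOf_map_cons, hihyp]
        omega

end Aux

/-- In the Cartesian tree of an array of distinct values, for `i ≤ j`, the answer to
`RMQ(i,j)` is the inorder rank of the LCA of the nodes with inorder ranks `i` and `j`. -/
theorem stmt1 {α : Type*} [LinearOrder α] {n : ℕ} (A : Fin n → α)
    (hA : Function.Injective A) (i j k : Fin n) (hij : i ≤ j)
    (hk : isArgmin A i j k) :
    (cartesian (List.ofFn A)).inList.idxOf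
        (lcp ((cartesian (List.ofFn A)).inList.getD (i : ℕ) [])
             ((cartesian (List.ofFn A)).inList.getD (j : ℕ) [])) = (k : ℕ) := by
  have hnd : (List.ofFn A).Nodup := List.nodup_ofFn.mpr hA
  have hlen : (List.ofFn A).length = n := List.length_ofFn
  apply main_lemma n (List.ofFn A) (by rw [hlen]) hnd i j k
    (Fin.le_def.mp hij) (by rw [hlen]; exact j.isLt) (by rw [hlen]; exact k.isLt)
    (Fin.le_def.mp hk.1) (Fin.le_def.mp hk.2.1)
  intro m hm hi hj'
  rw [List.getElem_ofFn, List.getElem_ofFn]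
  have h1 : (⟨(k : ℕ), k.isLt⟩ : Fin n) = k := Fin.eta _ _
  rw [h1]
  exact hk.2.2 ⟨m, by rwa [hlen] at hm⟩ (Fin.le_def.mpr hi) (Fin.le_def.mpr hj')
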